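/- Let k and l be positive integers, and let G=(V,E) be a graph on more than k vertices such that every vertex subset S of size exactly k satisfies |N_G(S)| ≥ l, where N_G(S) denotes the external neighborhood of S. Then G contains a path of length l (with l edges). -/
import Mathlib


open scoped Classical

/-- External neighborhood of a vertex set `S` in a graph `G`. -/
noncomputable def extNbhd {V : Type*} [Fintype V] [DecidableEq V]
    (G : SimpleGraph V) (S : Finset V) : Finset V :=
  Finset.univ.filter (fun v => v ∉ S ∧ ∃ u ∈ S, G.Adj u v)

lemma mem_extNbhd {V : Type*} [Fintype V] [DecidableEq V]
    {G : SimpleGraph V} {S : Finset V} {x : V} :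
    x ∈ extNbhd G S ↔ x ∉ S ∧ ∃ u ∈ S, G.Adj u x := by
  simp only [extNbhd, Finset.mem_filter, Finset.mem_univ, true_and]

/-- Truncate a path to any smaller length. -/
lemma trunc_path {V : Type*} {G : SimpleGraph V} {u v : V}
    (p : G.Walk u v) (hp : p.IsPath) (m : ℕ) (hm : m ≤ p.length) :
    ∃ (x y : V) (q : G.Walk x y), q.IsPath ∧ q.length = m := by
  induction p with
  | nil => exact ⟨u, u, SimpleGraph.Walk.nil, SimpleGraph.Walk.IsPath.nil, by
      simpa using Nat.le_antisymm hm (Nat.zero_le m) |>.symm⟩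
  | cons h q ih =>
    by_cases h' : m ≤ q.length
    · exact ih ((SimpleGraph.Walk.cons_isPath_iff _ _).1 hp).1 h'
    · refine ⟨_, _, SimpleGraph.Walk.cons h q, hp, ?_⟩
      simp only [SimpleGraph.Walk.length_cons] at hm ⊢
      omega

lemma supp_card_bound {V : Type*} [Fintype V] [DecidableEq V] {G : SimpleGraph V}
    {a b : V} (S : Finset V) (p : G.Walk b a) (hp : p.IsPath)
    (hdisj : ∀ x ∈ p.support, x ∉ S) :
    S.card + p.support.length ≤ Fintype.card V := by
  have hnd := hp.support_nodup
  have hdis : Disjoint S p.support.toFinset := by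
    rw [Finset.disjoint_left]
    intro x hx hx'
    exact hdisj x (by simpa using hx') hx
  calc S.card + p.support.length
      = S.card + p.support.toFinset.card := by
        rw [List.toFinset_card_of_nodup hnd]
    _ = (S ∪ p.support.toFinset).card := (Finset.card_union_of_disjoint hdis).symm
    _ ≤ Fintype.card V := by
        simpa using Finset.card_le_card (Finset.subset_univ _)

lemma dfs_key {V : Type*} [Fintype V] [DecidableEq V] (G : SimpleGraph V)
    (k l : ℕ) (hk : 0 < k) (hl : 0 < l) (hcard : k < Fintype.card V)
    (hexp : ∀ S : Finset V, S.card = k → l ≤ (extNbhd G S).card) :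
    ∀ n (S : Finset V) (a b : V) (p : G.Walk b a),
      Fintype.card V + k ≤ n + (2 * S.card + p.support.length) →
      p.IsPath → (∀ x ∈ p.support, x ∉ S) →
      (∀ x ∈ extNbhd G S, x ∈ p.support) →
      S.card < k → p.length < l →
      ∃ (u v : V) (q : G.Walk u v), q.IsPath ∧ q.length = l := by
  intro n
  induction n with
  | zero =>
    intro S a b p hmeas hp hdisj hnb hSk hlen
    have := supp_card_bound S p hp hdisj
    omega
  | succ n ih =>
    intro S a b p hmeas hp hdisj hnb hSk hlen
    by_cases hext : ∃ w, G.Adj b w ∧ w ∉ S ∧ w ∉ p.support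
    · -- extend the path
      obtain ⟨w, hadj, hwS, hwp⟩ := hext
      have hp' : (SimpleGraph.Walk.cons hadj.symm p).IsPath :=
        (SimpleGraph.Walk.cons_isPath_iff _ _).2 ⟨hp, hwp⟩
      by_cases hd : p.length + 1 = l
      · exact ⟨w, a, SimpleGraph.Walk.cons hadj.symm p, hp', by
          simp [hd]⟩
      · refine ih S a w (SimpleGraph.Walk.cons hadj.symm p) ?_ hp' ?_ ?_ hSk ?_
        · simp only [SimpleGraph.Walk.support_cons, List.length_cons]
          omega
        · intro x hx
          rcases List.mem_cons.1 (by simpa [SimpleGraph.Walk.support_cons] using hx) with h | h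
          · exact h ▸ hwS
          · exact hdisj x h
        · intro x hx
          simp only [SimpleGraph.Walk.support_cons, List.mem_cons]
          exact Or.inr (hnb x hx)
        · simp only [SimpleGraph.Walk.length_cons]
          omega
    · push_neg at hext
      -- every neighbor of b is in S or on the path: pop b
      have hbS : b ∉ S := hdisj b p.start_mem_support
      cases p with
      | nil =>
        clear hlen
        -- restart
        have hcardS' : (insert a S).card = S.card + 1 := Finset.card_insert_of_notMem hbS
        have hempty : ∀ x, x ∉ extNbhd G (insert a S) := by
          intro x hx
          obtain ⟨hxS', u, hu, hadj⟩ := mem_extNbhd.1 hx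
          have hxS : x ∉ S := fun h' => hxS' (Finset.mem_insert_of_mem h')
          rcases Finset.mem_insert.1 hu with rfl | hu
          · have h := hext x hadj hxS
            simp only [SimpleGraph.Walk.support_nil, List.mem_singleton] at h
            exact hxS' (h ▸ Finset.mem_insert_self u S)
          · have : x ∈ extNbhd G S := mem_extNbhd.2
              ⟨fun h => hxS' (Finset.mem_insert_of_mem h), u, hu, hadj⟩
            have := hnb x this
            simp only [SimpleGraph.Walk.support_nil, List.mem_singleton] at this
            exact hxS' (this ▸ Finset.mem_insert_self a S)
        by_cases hk' : (insert a S).card = k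
        · have := hexp _ hk'
          have h0 : (extNbhd G (insert a S)).card = 0 := by
            rw [Finset.card_eq_zero, Finset.eq_empty_iff_forall_notMem]
            exact hempty
          omega
        · have hlt : (insert a S).card < k := by omega
          have hne : ((insert a S)ᶜ).Nonempty := by
            rw [← Finset.card_pos, Finset.card_compl]
            omega
          obtain ⟨w, hw⟩ := hne
          have hwS' : w ∉ insert a S := Finset.mem_compl.1 hw
          refine ih (insert a S) w w (SimpleGraph.Walk.nil) ?_
            SimpleGraph.Walk.IsPath.nil ?_ ?_ ?_ (by simpa using hl)
          · simp only [SimpleGraph.Walk.support_nil, List.length_singleton] at hmeas ⊢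
            omega
          · intro x hx
            simp only [SimpleGraph.Walk.support_nil, List.mem_singleton] at hx
            exact hx ▸ hwS'
          · intro x hx
            exact absurd hx (hempty x)
          · omega
      | @cons _ c _ h q =>
        have hq : q.IsPath := ((SimpleGraph.Walk.cons_isPath_iff _ _).1 hp).1
        have hbq : b ∉ q.support := ((SimpleGraph.Walk.cons_isPath_iff _ _).1 hp).2
        have hcardS' : (insert b S).card = S.card + 1 := Finset.card_insert_of_notMem hbS
        have hnb' : ∀ x ∈ extNbhd G (insert b S), x ∈ q.support := by
          intro x hx
          obtain ⟨hxS', u, hu, hadj⟩ := mem_extNbhd.1 hx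
          have hxb : x ≠ b := fun h => hxS' (h ▸ Finset.mem_insert_self b S)
          have hxS : x ∉ S := fun h' => hxS' (Finset.mem_insert_of_mem h')
          have hxp : x ∈ (SimpleGraph.Walk.cons h q).support := by
            rcases Finset.mem_insert.1 hu with rfl | hu
            · exact hext x hadj hxS
            · exact hnb x (mem_extNbhd.2 ⟨hxS, u, hu, hadj⟩)
          simp only [SimpleGraph.Walk.support_cons, List.mem_cons] at hxp
          rcases hxp with h' | h'
          · exact absurd h' hxb
          · exact h'
        by_cases hk' : (insert b S).card = k
        · -- found: current path has length ≥ l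
          have h1 := hexp _ hk'
          have h2 : (extNbhd G (insert b S)).card ≤ q.support.length := by
            calc (extNbhd G (insert b S)).card
                ≤ q.support.toFinset.card := by
                  apply Finset.card_le_card
                  intro x hx
                  simpa using hnb' x hx
              _ ≤ q.support.length := List.toFinset_card_le _
          have hlen' : l ≤ (SimpleGraph.Walk.cons h q).length := by
            have := q.length_support
            simp only [SimpleGraph.Walk.length_cons]
            omega
          exact trunc_path _ hp l hlen'
        · refine ih (insert b S) a c q ?_ hq ?_ hnb' ?_ ?_
          · simp only [SimpleGraph.Walk.support_cons, List.length_cons] at hmeas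
            omega
          · intro x hx
            have hxb : x ≠ b := fun h' => hbq (h' ▸ hx)
            intro hx'
            rcases Finset.mem_insert.1 hx' with h' | h'
            · exact hxb h'
            · exact hdisj x (by
                simp only [SimpleGraph.Walk.support_cons, List.mem_cons]
                exact Or.inr hx) h'
          · omega
          · simp only [SimpleGraph.Walk.length_cons] at hlen
            omega

theorem stmt_0 {V : Type*} [Fintype V] [DecidableEq V] (G : SimpleGraph V)
    (k l : ℕ) (hk : 0 < k) (hl : 0 < l) (hcard : k < Fintype.card V)
    (hexp : ∀ S : Finset V, S.card = k → l ≤ (extNbhd G S).card) :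
    ∃ (u v : V) (p : G.Walk u v), p.IsPath ∧ p.length = l := by
  have hpos : 0 < Fintype.card V := by omega
  obtain ⟨v0⟩ := Fintype.card_pos_iff.1 hpos
  refine dfs_key G k l hk hl hcard hexp (Fintype.card V + k) ∅ v0 v0
    SimpleGraph.Walk.nil ?_ SimpleGraph.Walk.IsPath.nil ?_ ?_ hk (by simpa using hl)
  · simp
  · simp
  · intro x hx
    simp [extNbhd] at hx
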